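/- Let ℓ:(0,2)→(0,∞) be measurable, slowly varying at 0, and bounded away from 0 and ∞ on every compact subinterval of (0,2), and let β₂ > 1. Then ∫_r^1 u^{-β₂} ℓ(u) du is asymptotically equivalent to r^{1-β₂} ℓ(r)/(β₂-1) as r → 0+, i.e. the quotient of the two expressions tends to 1 as r → 0+. -/

import Mathlib

open MeasureTheory Topology Filter

open Set

lemma uct (h : ℝ → ℝ) (hm : Measurable h)
    (hsl : ∀ c : ℝ, Tendsto (fun x => h (x + c) - h x) atTop (𝓝 0))
    (ε : ℝ) (hε : 0 < ε) :
    ∃ X : ℝ, ∀ x ≥ X, ∀ c ∈ Icc (0:ℝ) 1, |h (x + c) - h x| ≤ ε := by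
  by_contra hcon
  push_neg at hcon
  choose x hx c hc hbig using fun k : ℕ => hcon k
  have hxtop : Tendsto x atTop atTop :=
    tendsto_atTop_mono hx tendsto_natCast_atTop_atTop
  have hx'top : Tendsto (fun k => x k + c k) atTop atTop :=
    tendsto_atTop_mono (fun k => le_add_of_nonneg_right (hc k).1) hxtop
  set S : ℕ → Set ℝ := fun k => {t | t ∈ Icc (0:ℝ) 2 ∧ |h (x k + t) - h (x k)| ≤ ε/3 ∧
      |h (x k + c k + t) - h (x k + c k)| ≤ ε/3} with hS
  have hSmeas : ∀ k, MeasurableSet (S k) := by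
    intro k
    apply measurableSet_Icc.inter
    apply MeasurableSet.inter
    · exact measurableSet_le (((hm.comp (measurable_const_add (x k))).sub measurable_const).abs)
        measurable_const
    · exact measurableSet_le (((hm.comp (measurable_const_add (x k + c k))).sub
        measurable_const).abs) measurable_const
  set D : ℕ → Set ℝ := fun n => Icc (0:ℝ) 2 \ ⋂ (k) (_ : n ≤ k), S k with hD
  have hDmeas : ∀ n, MeasurableSet (D n) := fun n =>
    measurableSet_Icc.diff (MeasurableSet.iInter fun k => MeasurableSet.iInter fun _ => hSmeas k)
  have hDanti : Antitone D := by
    intro n m hnm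
    apply diff_subset_diff_right
    intro t ht
    simp only [mem_iInter] at ht ⊢
    exact fun k hk => ht k (hnm.trans hk)
  have hDempty : ⋂ n, D n = ∅ := by
    ext t
    simp only [mem_iInter, mem_empty_iff_false, iff_false, not_forall]
    by_cases htI : t ∈ Icc (0:ℝ) 2
    · have h1 : ∀ᶠ k in atTop, |h (x k + t) - h (x k)| ≤ ε/3 := by
        have := (((hsl t).comp hxtop).abs).eventually_lt_const (by rw [abs_zero]; positivity :
          |(0:ℝ)| < ε/3)
        filter_upwards [this] with k hk using hk.le
      have h2 : ∀ᶠ k in atTop, |h ((x k + c k) + t) - h (x k + c k)| ≤ ε/3 := by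
        have := (((hsl t).comp hx'top).abs).eventually_lt_const (by rw [abs_zero]; positivity :
          |(0:ℝ)| < ε/3)
        filter_upwards [this] with k hk using hk.le
      obtain ⟨n, hn⟩ := (h1.and h2).exists_forall_of_atTop
      refine ⟨n, ?_⟩
      intro hmem
      rw [mem_diff] at hmem
      apply hmem.2
      simp only [mem_iInter]
      exact fun k hk => ⟨htI, (hn k hk).1, (hn k hk).2⟩
    · exact ⟨0, fun hmem => htI hmem.1⟩
  have hDfin : volume (D 0) ≠ ⊤ :=
    ((measure_mono diff_subset).trans_lt measure_Icc_lt_top).ne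
  have htend : Tendsto (volume ∘ D) atTop (𝓝 0) := by
    have := tendsto_measure_iInter_atTop (fun n => (hDmeas n).nullMeasurableSet) hDanti ⟨0, hDfin⟩
    rwa [hDempty, measure_empty] at this
  obtain ⟨N, hN⟩ : ∃ N, volume (D N) < ENNReal.ofReal (1/3) :=
    (htend.eventually_lt_const (ENNReal.ofReal_pos.mpr (by norm_num))).exists
  set E : Set ℝ := ⋂ (k) (_ : N ≤ k), S k with hE
  have hkey : ∃ t, t ∈ (Icc (0:ℝ) 1 ∩ E) ∩ (Icc (0:ℝ) 1 ∩ (fun t => t + c N) ⁻¹' E) := by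
    by_contra hAB
    push_neg at hAB
    have hempty : (Icc (0:ℝ) 1 ∩ E) ∩ (Icc (0:ℝ) 1 ∩ (fun t => t + c N) ⁻¹' E) = ∅ :=
      eq_empty_iff_forall_notMem.mpr hAB
    have hsub : Icc (0:ℝ) 1 ⊆ (Icc (0:ℝ) 1 \ (Icc (0:ℝ) 1 ∩ E)) ∪
        (Icc (0:ℝ) 1 \ (Icc (0:ℝ) 1 ∩ (fun t => t + c N) ⁻¹' E)) := by
      intro t ht
      by_cases h1 : t ∈ Icc (0:ℝ) 1 ∩ E
      · right
        refine ⟨ht, fun h2 => ?_⟩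
        exact absurd (mem_inter h1 h2) (by rw [hempty]; exact notMem_empty t)
      · exact Or.inl ⟨ht, h1⟩
    have hm1 : volume (Icc (0:ℝ) 1 \ (Icc (0:ℝ) 1 ∩ E)) ≤ volume (D N) := by
      apply measure_mono
      intro t ht
      rw [mem_diff] at ht
      refine ⟨Icc_subset_Icc_right one_le_two ht.1, fun hmem => ht.2 ⟨ht.1, hmem⟩⟩
    have hm2 : volume (Icc (0:ℝ) 1 \ (Icc (0:ℝ) 1 ∩ (fun t => t + c N) ⁻¹' E)) ≤
        volume (D N) := by
      have hsub2 : Icc (0:ℝ) 1 \ (Icc (0:ℝ) 1 ∩ (fun t => t + c N) ⁻¹' E) ⊆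
          (fun t => t + c N) ⁻¹' (D N) := by
        intro t ht
        rw [mem_diff] at ht
        have htI : t + c N ∈ Icc (0:ℝ) 2 := by
          obtain ⟨h0, h1'⟩ := ht.1
          obtain ⟨hc0, hc1⟩ := hc N
          rw [mem_Icc] at *
          constructor <;> linarith [hc0, hc1, h0, h1']
        exact ⟨htI, fun hmem => ht.2 ⟨ht.1, hmem⟩⟩
      calc volume _ ≤ volume ((fun t => t + c N) ⁻¹' (D N)) := measure_mono hsub2
        _ = volume (D N) := measure_preimage_add_right volume (c N) (D N)
    have hlt : volume (Icc (0:ℝ) 1) < ENNReal.ofReal 1 := by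
      calc volume (Icc (0:ℝ) 1) ≤ _ := measure_mono hsub
        _ ≤ volume (D N) + volume (D N) := (measure_union_le _ _).trans (add_le_add hm1 hm2)
        _ < ENNReal.ofReal (1/3) + ENNReal.ofReal (1/3) := ENNReal.add_lt_add hN hN
        _ < ENNReal.ofReal 1 := by
            rw [← ENNReal.ofReal_add (by norm_num) (by norm_num)]
            exact ENNReal.ofReal_lt_ofReal_iff_of_nonneg (by norm_num) |>.mpr (by norm_num)
    rw [Real.volume_Icc] at hlt
    norm_num at hlt
  obtain ⟨t, ⟨⟨ht01, htE⟩, ⟨_, htcE⟩⟩⟩ := hkey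
  have htSN : t ∈ S N := by
    simp only [hE, mem_iInter] at htE
    exact htE N le_rfl
  have htcSN : t + c N ∈ S N := by
    have h' : t + c N ∈ E := htcE
    simp only [hE, mem_iInter] at h'
    exact h' N le_rfl
  have e1 : |h (x N + (t + c N)) - h (x N)| ≤ ε/3 := htcSN.2.1
  have e2 : |h (x N + c N + t) - h (x N + c N)| ≤ ε/3 := htSN.2.2
  have harg : x N + (t + c N) = x N + c N + t := by ring
  rw [harg] at e1
  have := hbig N
  rw [abs_le] at e1 e2
  rcases lt_abs.mp this with h|h <;> linarith [e1.1, e1.2, e2.1, e2.2]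

lemma potter_add (h : ℝ → ℝ) (hm : Measurable h)
    (hsl : ∀ c : ℝ, Tendsto (fun x => h (x + c) - h x) atTop (𝓝 0))
    (ε : ℝ) (hε : 0 < ε) :
    ∃ X : ℝ, ∀ x ≥ X, ∀ c ≥ (0:ℝ), |h (x + c) - h x| ≤ ε * (1 + c) := by
  obtain ⟨X₀, hX₀⟩ := uct h hm hsl ε hε
  refine ⟨X₀, ?_⟩
  have key : ∀ n : ℕ, ∀ x ≥ X₀, ∀ c : ℝ, 0 ≤ c → c ≤ (n:ℝ) → |h (x + c) - h x| ≤ (n:ℝ) * ε := by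
    intro n
    induction n with
    | zero =>
      intro x hx c hc0 hc1
      have : c = 0 := le_antisymm (by exact_mod_cast hc1) hc0
      simp [this]
    | succ n ih =>
      intro x hx c hc0 hc1
      by_cases hcn : c ≤ 1
      · have := hX₀ x hx c ⟨hc0, hcn⟩
        calc |h (x + c) - h x| ≤ ε := this
          _ ≤ (n + 1 : ℕ) * ε := by
            have : (1:ℝ) ≤ (n+1:ℕ) := by exact_mod_cast Nat.one_le_iff_ne_zero.mpr (Nat.succ_ne_zero n)
            nlinarith
      · push_neg at hcn
        have h1 : |h ((x + 1) + (c - 1)) - h (x + 1)| ≤ n * ε := by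
          apply ih (x + 1) (by linarith) (c - 1) (by linarith)
          have : (c:ℝ) ≤ (n:ℕ) + 1 := by exact_mod_cast hc1
          linarith
        have h2 : |h (x + 1) - h x| ≤ ε := hX₀ x hx 1 ⟨zero_le_one, le_rfl⟩
        have harg : (x + 1) + (c - 1) = x + c := by ring
        rw [harg] at h1
        rw [abs_le] at h1 h2 ⊢
        push_cast
        constructor <;> nlinarith [h1.1, h1.2, h2.1, h2.2]
  intro x hx c hc
  have h1 := key ⌈c⌉₊ x hx c hc (Nat.le_ceil c)
  have h2 : (⌈c⌉₊ : ℝ) ≤ 1 + c := by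
    have := Nat.ceil_lt_add_one hc
    linarith
  calc |h (x + c) - h x| ≤ ⌈c⌉₊ * ε := h1
    _ ≤ (1 + c) * ε := by nlinarith
    _ = ε * (1 + c) := by ring

lemma potter_mul (ℓ : ℝ → ℝ) (hmeas : Measurable ℓ)
    (hpos : ∀ t ∈ Set.Ioo (0:ℝ) 2, 0 < ℓ t)
    (hslow : ∀ lam : ℝ, 0 < lam →
      Tendsto (fun r => ℓ (lam * r) / ℓ r) (𝓝[>] (0:ℝ)) (𝓝 1))
    (ε : ℝ) (hε : 0 < ε) :
    ∃ δ : ℝ, 0 < δ ∧ δ < 1 ∧ ∀ r u : ℝ, 0 < r → r ≤ u → u ≤ δ →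
      ℓ u ≤ Real.exp ε * (u/r) ^ ε * ℓ r ∧ ℓ r ≤ Real.exp ε * (u/r) ^ ε * ℓ u := by
  have hm : Measurable (fun x : ℝ => Real.log (ℓ (Real.exp (-x)))) :=
    Real.measurable_log.comp (hmeas.comp (Real.measurable_exp.comp measurable_neg))
  have hsl : ∀ c : ℝ, Tendsto (fun x => (fun x : ℝ => Real.log (ℓ (Real.exp (-x)))) (x + c)
      - (fun x : ℝ => Real.log (ℓ (Real.exp (-x)))) x) atTop (𝓝 0) := by
    intro c
    have hexp : Tendsto (fun x : ℝ => Real.exp (-x)) atTop (𝓝[>] (0:ℝ)) := by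
      refine tendsto_nhdsWithin_of_tendsto_nhds_of_eventually_within _ ?_ ?_
      · exact Real.tendsto_exp_atBot.comp tendsto_neg_atTop_atBot
      · filter_upwards with x using Real.exp_pos _
    have h1 := (hslow (Real.exp (-c)) (Real.exp_pos _)).comp hexp
    have h2 := (Real.continuousAt_log one_ne_zero).tendsto.comp h1
    rw [Real.log_one] at h2
    refine h2.congr' ?_
    filter_upwards [eventually_ge_atTop (max 0 (-c))] with x hx
    have hx0 : 0 ≤ x := le_trans (le_max_left _ _) hx
    have hxc : 0 ≤ x + c := by have := le_trans (le_max_right _ _) hx; linarith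
    have p1 : 0 < ℓ (Real.exp (-x)) := by
      apply hpos
      exact ⟨Real.exp_pos _, lt_of_le_of_lt (Real.exp_le_one_iff.mpr (by linarith)) one_lt_two⟩
    have p2 : 0 < ℓ (Real.exp (-c) * Real.exp (-x)) := by
      rw [← Real.exp_add]
      apply hpos
      exact ⟨Real.exp_pos _, lt_of_le_of_lt (Real.exp_le_one_iff.mpr (by linarith)) one_lt_two⟩
    show Real.log (ℓ (Real.exp (-c) * Real.exp (-x)) / ℓ (Real.exp (-x))) = _
    rw [Real.log_div p2.ne' p1.ne', ← Real.exp_add]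
    ring_nf
  obtain ⟨X, hX⟩ := potter_add _ hm hsl ε hε
  refine ⟨min (Real.exp (-X)) (1/2), lt_min (Real.exp_pos _) (by norm_num),
    lt_of_le_of_lt (min_le_right _ _) (by norm_num), ?_⟩
  intro r u hr hru huδ
  have hu : 0 < u := lt_of_lt_of_le hr hru
  have hu2 : u < 2 := lt_of_le_of_lt (huδ.trans (min_le_right _ _)) (by norm_num)
  have hr2 : r < 2 := lt_of_le_of_lt hru hu2
  have hlu : 0 < ℓ u := hpos u ⟨hu, hu2⟩
  have hlr : 0 < ℓ r := hpos r ⟨hr, hr2⟩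
  set x := -Real.log u with hxdef
  set c := Real.log u - Real.log r with hcdef
  have hxX : X ≤ x := by
    have h1 : Real.log u ≤ -X := by
      rw [Real.log_le_iff_le_exp hu]
      exact huδ.trans (min_le_left _ _)
    simp only [hxdef]; linarith
  have hc0 : 0 ≤ c := sub_nonneg.mpr (Real.log_le_log hr hru)
  have key := hX x hxX c hc0
  have e1 : Real.exp (-x) = u := by rw [hxdef, neg_neg, Real.exp_log hu]
  have e2 : Real.exp (-(x + c)) = r := by
    have : -(x + c) = Real.log r := by rw [hxdef, hcdef]; ring
    rw [this, Real.exp_log hr]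
  rw [e1, e2] at key
  have hcval : c = Real.log (u/r) := by rw [hcdef, Real.log_div hu.ne' hr.ne']
  have habs := abs_le.mp key
  constructor
  · have hb : Real.log (ℓ u) ≤ Real.log (ℓ r) + ε * (1 + c) := by linarith [habs.1]
    calc ℓ u = Real.exp (Real.log (ℓ u)) := (Real.exp_log hlu).symm
      _ ≤ Real.exp (Real.log (ℓ r) + ε * (1 + c)) := Real.exp_le_exp.mpr hb
      _ = Real.exp ε * (u/r) ^ ε * ℓ r := by
          rw [show Real.log (ℓ r) + ε * (1 + c) = ε + (Real.log (u/r) * ε + Real.log (ℓ r)) by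
            rw [← hcval]; ring, Real.exp_add, Real.exp_add, Real.exp_log hlr,
            Real.rpow_def_of_pos (div_pos hu hr)]
          ring
  · have hb : Real.log (ℓ r) ≤ Real.log (ℓ u) + ε * (1 + c) := by linarith [habs.2]
    calc ℓ r = Real.exp (Real.log (ℓ r)) := (Real.exp_log hlr).symm
      _ ≤ Real.exp (Real.log (ℓ u) + ε * (1 + c)) := Real.exp_le_exp.mpr hb
      _ = Real.exp ε * (u/r) ^ ε * ℓ u := by
          rw [show Real.log (ℓ u) + ε * (1 + c) = ε + (Real.log (u/r) * ε + Real.log (ℓ u)) by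
            rw [← hcval]; ring, Real.exp_add, Real.exp_add, Real.exp_log hlu,
            Real.rpow_def_of_pos (div_pos hu hr)]
          ring

set_option maxHeartbeats 1000000 in
/-- Proposition 2.2 (ii): if `ℓ : (0,2) → (0,∞)` is measurable, slowly varying at `0` and
bounded away from `0` and `∞` on compact subintervals of `(0,2)`, and `β₂ > 1`, then
`∫_r^1 u^{-β₂} ℓ(u) du ∼ r^{1-β₂} ℓ(r) / (β₂-1)` as `r → 0+`. -/
theorem stmt_1 (ℓ : ℝ → ℝ) (hmeas : Measurable ℓ)
    (hpos : ∀ t ∈ Set.Ioo (0:ℝ) 2, 0 < ℓ t)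
    (hslow : ∀ lam : ℝ, 0 < lam →
      Tendsto (fun r => ℓ (lam * r) / ℓ r) (𝓝[>] (0:ℝ)) (𝓝 1))
    (hbdd : ∀ a b : ℝ, 0 < a → b < 2 → ∃ m M : ℝ, 0 < m ∧
      ∀ t ∈ Set.Icc a b, m ≤ ℓ t ∧ ℓ t ≤ M)
    (β₂ : ℝ) (hβ : 1 < β₂) :
    Tendsto (fun r => (∫ u in Set.Ioo r (1:ℝ), u ^ (-β₂) * ℓ u) /
      (r ^ (1 - β₂) * ℓ r / (β₂ - 1))) (𝓝[>] (0:ℝ)) (𝓝 1) := by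
  have hβ1 : 0 < β₂ - 1 := by linarith
  have hfmeas : Measurable (fun u : ℝ => u ^ (-β₂) * ℓ u) := by
    apply Measurable.mul _ hmeas
    measurability
  -- integrability on Ioo a b for 0 < a, b ≤ 1
  have hint : ∀ a b : ℝ, 0 < a → b ≤ 1 → IntegrableOn (fun u : ℝ => u ^ (-β₂) * ℓ u)
      (Ioo a b) volume := by
    intro a b ha hb1
    rcases le_or_gt b a with hba | hab
    · rw [Ioo_eq_empty (by exact fun h => absurd hba (not_le.mpr h))]
      exact integrableOn_empty
    obtain ⟨m', M', hm'0, hmM'⟩ := hbdd a b ha (by linarith)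
    apply Measure.integrableOn_of_bounded measure_Ioo_lt_top.ne
      hfmeas.aestronglyMeasurable (M := a ^ (-β₂) * M')
    filter_upwards [ae_restrict_mem measurableSet_Ioo] with u hu
    have hu0 : 0 < u := lt_trans ha hu.1
    have hu2 : u < 2 := by have := hu.2; linarith
    have hlu : 0 < ℓ u := hpos u ⟨hu0, hu2⟩
    have h1 : u ^ (-β₂) ≤ a ^ (-β₂) :=
      Real.rpow_le_rpow_of_nonpos ha hu.1.le (by linarith)
    have h2 := hmM' u ⟨hu.1.le, hu.2.le⟩
    rw [Real.norm_eq_abs, abs_of_nonneg (by positivity)]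
    exact mul_le_mul h1 h2.2 hlu.le (by positivity)
  -- reduce to ε' ≤ 1
  rw [Metric.tendsto_nhds]
  have main : ∀ ε' : ℝ, 0 < ε' → ε' ≤ 1 → ∀ᶠ r in 𝓝[>] (0:ℝ),
      dist ((∫ u in Set.Ioo r (1:ℝ), u ^ (-β₂) * ℓ u) /
        (r ^ (1 - β₂) * ℓ r / (β₂ - 1))) 1 < ε' := by
    intro ε' hε'0 hε'1
    -- choose ε
    have hfUp : Tendsto (fun ε => Real.exp ε * (β₂ - 1) / (β₂ - 1 - ε)) (𝓝[>] (0:ℝ)) (𝓝 1) := by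
      have hc : ContinuousAt (fun ε => Real.exp ε * (β₂ - 1) / (β₂ - 1 - ε)) 0 := by
        apply ContinuousAt.div
        · exact (Real.continuous_exp.continuousAt).mul continuousAt_const
        · exact continuousAt_const.sub continuousAt_id
        · simpa using hβ1.ne'
      have h0 : Tendsto (fun ε => Real.exp ε * (β₂ - 1) / (β₂ - 1 - ε)) (𝓝[>] (0:ℝ))
          (𝓝 (Real.exp 0 * (β₂ - 1) / (β₂ - 1 - 0))) :=
        hc.tendsto.mono_left nhdsWithin_le_nhds
      simp only [Real.exp_zero, sub_zero, add_zero, neg_zero, one_mul, div_self hβ1.ne'] at h0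
      exact h0
    have hfLo : Tendsto (fun ε => Real.exp (-ε) * (β₂ - 1) / (β₂ - 1 + ε)) (𝓝[>] (0:ℝ)) (𝓝 1) := by
      have hc : ContinuousAt (fun ε => Real.exp (-ε) * (β₂ - 1) / (β₂ - 1 + ε)) 0 := by
        apply ContinuousAt.div
        · exact ((Real.continuous_exp.comp continuous_neg).continuousAt).mul continuousAt_const
        · exact continuousAt_const.add continuousAt_id
        · simpa using hβ1.ne'
      have h0 : Tendsto (fun ε => Real.exp (-ε) * (β₂ - 1) / (β₂ - 1 + ε)) (𝓝[>] (0:ℝ))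
          (𝓝 (Real.exp (-0) * (β₂ - 1) / (β₂ - 1 + 0))) :=
        hc.tendsto.mono_left nhdsWithin_le_nhds
      simp only [Real.exp_zero, sub_zero, add_zero, neg_zero, one_mul, div_self hβ1.ne'] at h0
      exact h0
    obtain ⟨ε, hεmem, hUp, hLo⟩ : ∃ ε : ℝ, ε ∈ Ioo 0 ((β₂-1)/2) ∧
        Real.exp ε * (β₂ - 1) / (β₂ - 1 - ε) < 1 + ε'/2 ∧
        1 - ε'/2 < Real.exp (-ε) * (β₂ - 1) / (β₂ - 1 + ε) := by
      have e1 : ∀ᶠ ε in 𝓝[>] (0:ℝ), ε ∈ Ioo 0 ((β₂-1)/2) :=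
        Ioo_mem_nhdsGT_of_mem ⟨le_rfl, by linarith⟩
      have e2 := hfUp.eventually_lt_const (by linarith : (1:ℝ) < 1 + ε'/2)
      have e3 := hfLo.eventually_const_lt (by linarith : 1 - ε'/2 < (1:ℝ))
      obtain ⟨ε, ⟨h1, h2⟩, h3⟩ := ((e1.and e2).and e3).exists
      exact ⟨ε, h1, h2, h3⟩
    obtain ⟨hε0, hεβ⟩ := hεmem
    have hβε : 0 < β₂ - 1 - ε := by linarith
    have hβε' : 0 < β₂ - 1 + ε := by linarith
    -- Potter
    obtain ⟨δ, hδ0, hδ1, hP⟩ := potter_mul ℓ hmeas hpos hslow ε hε0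
    have hδ2 : δ < 2 := by linarith
    have hlδ : 0 < ℓ δ := hpos δ ⟨hδ0, hδ2⟩
    obtain ⟨m, M, hm0, hmM⟩ := hbdd δ 1 hδ0 one_lt_two
    have hM0 : 0 < M := lt_of_lt_of_le hlδ (hmM δ ⟨le_rfl, hδ1.le⟩).2
    set C : ℝ := δ ^ (-β₂) * M * (1 - δ) with hCdef
    have hC0 : 0 ≤ C := by
      apply mul_nonneg (mul_nonneg (Real.rpow_nonneg hδ0.le _) hM0.le)
      linarith
    set c₀ : ℝ := Real.exp (-ε) * ℓ δ * (δ ^ ε)⁻¹ with hc₀def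
    have hc₀0 : 0 < c₀ := by
      apply mul_pos (mul_pos (Real.exp_pos _) hlδ)
      exact inv_pos.mpr (Real.rpow_pos_of_pos hδ0 _)
    -- lower bound on ℓ r
    have hlow : ∀ r : ℝ, 0 < r → r ≤ δ → c₀ * r ^ ε ≤ ℓ r := by
      intro r hr hrδ
      have h2 := (hP r δ hr hrδ le_rfl).1
      have hmul : (r/δ) ^ ε * (δ/r) ^ ε = 1 := by
        rw [← Real.mul_rpow (by positivity) (by positivity),
          show r/δ * (δ/r) = 1 by field_simp]
        exact Real.one_rpow _
      have step : Real.exp (-ε) * (r/δ) ^ ε * ℓ δ ≤ ℓ r := by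
        calc Real.exp (-ε) * (r/δ) ^ ε * ℓ δ
            ≤ Real.exp (-ε) * (r/δ) ^ ε * (Real.exp ε * (δ/r) ^ ε * ℓ r) := by
              apply mul_le_mul_of_nonneg_left h2 (by positivity)
          _ = (Real.exp (-ε) * Real.exp ε) * ((r/δ) ^ ε * (δ/r) ^ ε) * ℓ r := by ring
          _ = ℓ r := by rw [← Real.exp_add, hmul]; simp
      have hrw : (r/δ) ^ ε = r ^ ε * (δ ^ ε)⁻¹ := by
        rw [Real.div_rpow hr.le hδ0.le, div_eq_mul_inv]
      calc c₀ * r ^ ε = Real.exp (-ε) * (r ^ ε * (δ ^ ε)⁻¹) * ℓ δ := by rw [hc₀def]; ring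
        _ = Real.exp (-ε) * (r/δ) ^ ε * ℓ δ := by rw [hrw]
        _ ≤ ℓ r := step
    -- eventualities
    have htop : Tendsto (fun r : ℝ => r ^ (1 - β₂ + ε)) (𝓝[>] (0:ℝ)) atTop := by
      have h1 : Tendsto (fun r : ℝ => (r⁻¹) ^ (β₂ - 1 - ε)) (𝓝[>] (0:ℝ)) atTop :=
        (tendsto_rpow_atTop hβε).comp tendsto_inv_nhdsGT_zero
      apply h1.congr'
      filter_upwards [self_mem_nhdsWithin] with r (hr : 0 < r)
      rw [Real.inv_rpow hr.le, ← Real.rpow_neg hr.le, show -(β₂ - 1 - ε) = 1 - β₂ + ε by ring]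
    -- eventual bound E2
    have hE2 : ∀ᶠ r in 𝓝[>] (0:ℝ), C * (β₂ - 1) ≤ ε'/4 * (c₀ * r ^ (1 - β₂ + ε)) := by
      filter_upwards [htop.eventually_ge_atTop (C * (β₂ - 1) / (ε'/4 * c₀))] with r hr
      rw [div_le_iff₀ (by positivity)] at hr
      calc C * (β₂ - 1) ≤ r ^ (1 - β₂ + ε) * (ε'/4 * c₀) := hr
        _ = ε'/4 * (c₀ * r ^ (1 - β₂ + ε)) := by ring
    -- eventual bound E3
    have hE3 : ∀ᶠ r in 𝓝[>] (0:ℝ), (r/δ) ^ (β₂ - 1 + ε) ≤ ε'/2 := by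
      have hdiv : Tendsto (fun r : ℝ => r/δ) (𝓝[>] (0:ℝ)) (𝓝[>] (0:ℝ)) := by
        apply tendsto_nhdsWithin_of_tendsto_nhds_of_eventually_within
        · have h0 : Tendsto (fun r : ℝ => r/δ) (𝓝 (0:ℝ)) (𝓝 (0/δ)) :=
            (continuous_id.div_const δ).tendsto 0
          rw [zero_div] at h0
          exact h0.mono_left nhdsWithin_le_nhds
        · filter_upwards [self_mem_nhdsWithin] with r (hr : 0 < r)
          simpa using div_pos hr hδ0
      have hct : Tendsto (fun s : ℝ => s ^ (β₂ - 1 + ε)) (𝓝 (0:ℝ)) (𝓝 0) := by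
        have h0 := (Real.continuousAt_rpow_const 0 (β₂ - 1 + ε) (Or.inr hβε'.le)).tendsto
        rwa [Real.zero_rpow hβε'.ne'] at h0
      have := ((hct.mono_left nhdsWithin_le_nhds).comp hdiv).eventually_lt_const
        (by positivity : (0:ℝ) < ε'/2)
      filter_upwards [this] with r hr using hr.le
    -- sandwich helper
    have flip : ∀ a b L R : ℝ, 0 < a → 0 < b →
        L ≤ Real.exp ε * (b/a) ^ ε * R → Real.exp (-ε) * (a/b) ^ ε * L ≤ R := by
      intro a b L R ha hb hLR
      have hmul : (a/b) ^ ε * (b/a) ^ ε = 1 := by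
        rw [← Real.mul_rpow (by positivity) (by positivity),
          show a/b * (b/a) = 1 by field_simp]
        exact Real.one_rpow _
      calc Real.exp (-ε) * (a/b) ^ ε * L
          ≤ Real.exp (-ε) * (a/b) ^ ε * (Real.exp ε * (b/a) ^ ε * R) := by
            apply mul_le_mul_of_nonneg_left hLR (by positivity)
        _ = (Real.exp (-ε) * Real.exp ε) * ((a/b) ^ ε * (b/a) ^ ε) * R := by ring
        _ = R := by rw [← Real.exp_add, hmul]; simp
    -- main eventual estimate
    filter_upwards [Ioo_mem_nhdsGT_of_mem (show (0:ℝ) ∈ Ico 0 δ from ⟨le_rfl, hδ0⟩),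
      hE2, hE3] with r hrmem hrE2 hrE3
    obtain ⟨hr0, hrδ⟩ := hrmem
    have hr1 : r < 1 := hrδ.trans hδ1
    have hlr : 0 < ℓ r := hpos r ⟨hr0, by linarith⟩
    have hRpos : 0 < r ^ (1 - β₂) := Real.rpow_pos_of_pos hr0 _
    have hrε : 0 < r ^ ε := Real.rpow_pos_of_pos hr0 _
    have hD : 0 < r ^ (1 - β₂) * ℓ r / (β₂ - 1) := by positivity
    -- split
    have hsp : Ioo r 1 = Ioo r δ ∪ Ico δ 1 := (Ioo_union_Ico_eq_Ioo hrδ hδ1.le).symm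
    have hiIoo : IntegrableOn (fun u : ℝ => u ^ (-β₂) * ℓ u) (Ioo r δ) volume :=
      hint r δ hr0 hδ1.le
    have hiIco : IntegrableOn (fun u : ℝ => u ^ (-β₂) * ℓ u) (Ico δ 1) volume := by
      apply (hint (δ/2) 1 (by positivity) le_rfl).mono_set
      intro u hu
      exact ⟨lt_of_lt_of_le (by linarith) hu.1, hu.2⟩
    have hdisj : Disjoint (Ioo r δ) (Ico δ 1) :=
      Set.disjoint_left.mpr fun u hu1 hu2 => absurd hu1.2 (not_lt.mpr hu2.1)
    have hbsplit : ∫ u in Ioo r 1, u ^ (-β₂) * ℓ u =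
        (∫ u in Ioo r δ, u ^ (-β₂) * ℓ u) + ∫ u in Ico δ 1, u ^ (-β₂) * ℓ u := by
      rw [hsp]
      exact setIntegral_union hdisj measurableSet_Ico hiIoo hiIco
    -- rpow integrability on Ioo r δ
    have hIrpow : ∀ p : ℝ, IntegrableOn (fun u : ℝ => u ^ p) (Ioo r δ) volume := by
      intro p
      have h0 : (0:ℝ) ∉ Set.uIcc r δ := notMem_uIcc_of_lt hr0 hδ0
      have := intervalIntegral.intervalIntegrable_rpow (μ := volume) (r := p) (a := r) (b := δ) (Or.inr h0)
      rwa [intervalIntegrable_iff_integrableOn_Ioo_of_le hrδ.le] at this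
    have hIval : ∀ p : ℝ, p ≠ -1 → ∫ u in Ioo r δ, u ^ p =
        (δ ^ (p + 1) - r ^ (p + 1)) / (p + 1) := by
      intro p hp
      rw [← integral_Ioc_eq_integral_Ioo, ← intervalIntegral.integral_of_le hrδ.le]
      exact integral_rpow (Or.inr ⟨hp, notMem_uIcc_of_lt hr0 hδ0⟩)
    -- upper bound on the main piece
    have hup1 : ∫ u in Ioo r δ, u ^ (-β₂) * ℓ u ≤
        Real.exp ε * ℓ r * r ^ (1 - β₂) / (β₂ - 1 - ε) := by
      have hptw : ∀ u ∈ Ioo r δ, u ^ (-β₂) * ℓ u ≤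
          (Real.exp ε * ℓ r / r ^ ε) * u ^ (ε - β₂) := by
        intro u hu
        have hu0 : 0 < u := hr0.trans hu.1
        have hPu := (hP r u hr0 hu.1.le hu.2.le).1
        calc u ^ (-β₂) * ℓ u ≤ u ^ (-β₂) * (Real.exp ε * (u/r) ^ ε * ℓ r) :=
              mul_le_mul_of_nonneg_left hPu (Real.rpow_nonneg hu0.le _)
          _ = (Real.exp ε * ℓ r / r ^ ε) * u ^ (ε - β₂) := by
              rw [Real.div_rpow hu0.le hr0.le, show ε - β₂ = ε + -β₂ by ring,
                Real.rpow_add hu0]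
              field_simp
      have hmono := setIntegral_mono_on hiIoo
        ((hIrpow (ε - β₂)).const_mul (Real.exp ε * ℓ r / r ^ ε)) measurableSet_Ioo hptw
      have hval : ∫ u in Ioo r δ, (Real.exp ε * ℓ r / r ^ ε) * u ^ (ε - β₂) =
          (Real.exp ε * ℓ r / r ^ ε) * ((δ ^ (ε - β₂ + 1) - r ^ (ε - β₂ + 1)) / (ε - β₂ + 1)) := by
        rw [MeasureTheory.integral_const_mul, hIval (ε - β₂) (by intro h; rw [show ε - β₂ = -1 ↔ ε = β₂ - 1 by constructor <;> intro <;> linarith] at h; linarith)]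
      rw [hval] at hmono
      refine hmono.trans ?_
      have hd : (δ ^ (ε - β₂ + 1) - r ^ (ε - β₂ + 1)) / (ε - β₂ + 1) =
          (r ^ (ε - β₂ + 1) - δ ^ (ε - β₂ + 1)) / (β₂ - 1 - ε) := by
        rw [show ε - β₂ + 1 = -(β₂ - 1 - ε) by ring] at *
        rw [div_neg, ← neg_div, neg_sub]
      rw [hd]
      have hbound : (r ^ (ε - β₂ + 1) - δ ^ (ε - β₂ + 1)) / (β₂ - 1 - ε) ≤
          r ^ (ε - β₂ + 1) / (β₂ - 1 - ε) :=
        (div_le_div_iff_of_pos_right hβε).mpr (by linarith [Real.rpow_nonneg hδ0.le (ε - β₂ + 1)])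
      refine (mul_le_mul_of_nonneg_left hbound (by positivity)).trans ?_
      have hq : r ^ (ε - β₂ + 1) = r ^ (1 - β₂) * r ^ ε := by
        rw [show ε - β₂ + 1 = (1 - β₂) + ε by ring, Real.rpow_add hr0]
      rw [hq]
      rw [div_mul_eq_mul_div, div_le_div_iff₀ (by positivity) hβε]
      field_simp
      ring_nf
      exact le_rfl
    -- upper piece 2
    have hup2 : ∫ u in Ico δ 1, u ^ (-β₂) * ℓ u ≤ C := by
      have hconst : IntegrableOn (fun _ : ℝ => δ ^ (-β₂) * M) (Ico δ 1) volume :=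
        integrableOn_const measure_Ico_lt_top.ne
      have hptw : ∀ u ∈ Ico δ 1, u ^ (-β₂) * ℓ u ≤ δ ^ (-β₂) * M := by
        intro u hu
        have hu0 : 0 < u := lt_of_lt_of_le hδ0 hu.1
        have h1 : u ^ (-β₂) ≤ δ ^ (-β₂) :=
          Real.rpow_le_rpow_of_nonpos hδ0 hu.1 (by linarith)
        have h2 := (hmM u ⟨hu.1, hu.2.le⟩).2
        exact mul_le_mul h1 h2 (hpos u ⟨hu0, by linarith [hu.2]⟩).le (Real.rpow_nonneg hδ0.le _)
      calc ∫ u in Ico δ 1, u ^ (-β₂) * ℓ u ≤ ∫ _u in Ico δ 1, δ ^ (-β₂) * M :=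
            setIntegral_mono_on hiIco hconst measurableSet_Ico hptw
        _ = (volume (Ico δ 1)).toReal * (δ ^ (-β₂) * M) := by
            rw [setIntegral_const, smul_eq_mul, measureReal_def]
        _ = (1 - δ) * (δ ^ (-β₂) * M) := by
            rw [Real.volume_Ico, ENNReal.toReal_ofReal (by linarith)]
        _ = C := by rw [hCdef]; ring
    -- tail nonneg
    have htail : 0 ≤ ∫ u in Ico δ 1, u ^ (-β₂) * ℓ u := by
      apply setIntegral_nonneg measurableSet_Ico
      intro u hu
      have hu0 : 0 < u := lt_of_lt_of_le hδ0 hu.1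
      exact mul_nonneg (Real.rpow_nonneg hu0.le _) (hpos u ⟨hu0, by linarith [hu.2]⟩).le
    -- lower bound on the main piece
    set s : ℝ := (r/δ) ^ (β₂ - 1 + ε) with hsdef
    have hs0 : 0 ≤ s := Real.rpow_nonneg (by positivity) _
    have hA : r ^ ε * r ^ (-β₂ - ε + 1) = r ^ (1 - β₂) := by
      rw [← Real.rpow_add hr0, show ε + (-β₂ - ε + 1) = 1 - β₂ by ring]
    have hB : r ^ ε * δ ^ (-β₂ - ε + 1) = s * r ^ (1 - β₂) := by
      have h1 : r ^ (β₂ - 1 + ε) * r ^ (1 - β₂) = r ^ ε := by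
        rw [← Real.rpow_add hr0, show β₂ - 1 + ε + (1 - β₂) = ε by ring]
      calc r ^ ε * δ ^ (-β₂ - ε + 1)
          = r ^ ε * (δ ^ (β₂ - 1 + ε))⁻¹ := by
            rw [show -β₂ - ε + 1 = -(β₂ - 1 + ε) by ring, Real.rpow_neg hδ0.le]
        _ = s * r ^ (1 - β₂) := by
            rw [hsdef, Real.div_rpow hr0.le hδ0.le, div_mul_eq_mul_div, h1, div_eq_mul_inv]
    have hlo1 : Real.exp (-ε) * ℓ r * r ^ (1 - β₂) * (1 - s) / (β₂ - 1 + ε) ≤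
        ∫ u in Ioo r δ, u ^ (-β₂) * ℓ u := by
      have hptw : ∀ u ∈ Ioo r δ, (Real.exp (-ε) * ℓ r * r ^ ε) * u ^ (-β₂ - ε) ≤
          u ^ (-β₂) * ℓ u := by
        intro u hu
        have hu0 : 0 < u := hr0.trans hu.1
        have hPu := flip r u (ℓ r) (ℓ u) hr0 hu0 (hP r u hr0 hu.1.le hu.2.le).2
        calc (Real.exp (-ε) * ℓ r * r ^ ε) * u ^ (-β₂ - ε)
            = u ^ (-β₂) * (Real.exp (-ε) * (r/u) ^ ε * ℓ r) := by
              rw [Real.div_rpow hr0.le hu0.le, show -β₂ - ε = -β₂ + -ε by ring,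
                Real.rpow_add hu0, Real.rpow_neg hu0.le ε]
              field_simp
          _ ≤ u ^ (-β₂) * ℓ u := mul_le_mul_of_nonneg_left hPu (Real.rpow_nonneg hu0.le _)
      have hmono := setIntegral_mono_on
        ((hIrpow (-β₂ - ε)).const_mul (Real.exp (-ε) * ℓ r * r ^ ε)) hiIoo
        measurableSet_Ioo hptw
      have hval : ∫ u in Ioo r δ, (Real.exp (-ε) * ℓ r * r ^ ε) * u ^ (-β₂ - ε) =
          (Real.exp (-ε) * ℓ r * r ^ ε) *
            ((δ ^ (-β₂ - ε + 1) - r ^ (-β₂ - ε + 1)) / (-β₂ - ε + 1)) := by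
        rw [MeasureTheory.integral_const_mul, hIval (-β₂ - ε) (by intro hcon; linarith)]
      rw [hval] at hmono
      refine le_trans (le_of_eq ?_) hmono
      have e' : (Real.exp (-ε) * ℓ r * r ^ ε) *
          ((δ ^ (-β₂ - ε + 1) - r ^ (-β₂ - ε + 1)) / (-β₂ - ε + 1)) =
          Real.exp (-ε) * ℓ r *
            ((r ^ ε * δ ^ (-β₂ - ε + 1) - r ^ ε * r ^ (-β₂ - ε + 1)) / (-β₂ - ε + 1)) := by
        ring
      rw [e', hB, hA, show -β₂ - ε + 1 = -(β₂ - 1 + ε) by ring, div_neg, ← neg_div, neg_sub]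
      ring
    -- upper combination
    have hQup : (∫ u in Ioo r 1, u ^ (-β₂) * ℓ u) / (r ^ (1 - β₂) * ℓ r / (β₂ - 1)) < 1 + ε' := by
      have hCD : C / (r ^ (1 - β₂) * ℓ r / (β₂ - 1)) ≤ ε'/4 := by
        rw [div_le_iff₀ hD]
        have h1 : c₀ * r ^ (1 - β₂ + ε) = (c₀ * r ^ ε) * r ^ (1 - β₂) := by
          rw [Real.rpow_add hr0]
          ring
        have h2 : (c₀ * r ^ ε) * r ^ (1 - β₂) ≤ ℓ r * r ^ (1 - β₂) :=
          mul_le_mul_of_nonneg_right (hlow r hr0 hrδ.le) hRpos.le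
        have h3 : C * (β₂ - 1) ≤ ε'/4 * (ℓ r * r ^ (1 - β₂)) := by
          calc C * (β₂ - 1) ≤ ε'/4 * (c₀ * r ^ (1 - β₂ + ε)) := hrE2
            _ = ε'/4 * ((c₀ * r ^ ε) * r ^ (1 - β₂)) := by rw [h1]
            _ ≤ ε'/4 * (ℓ r * r ^ (1 - β₂)) :=
                mul_le_mul_of_nonneg_left h2 (by positivity)
        have heq : ε'/4 * (r ^ (1 - β₂) * ℓ r / (β₂ - 1)) * (β₂ - 1) =
            ε'/4 * (ℓ r * r ^ (1 - β₂)) := by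
          field_simp
        have h4 : C * (β₂ - 1) ≤ ε'/4 * (r ^ (1 - β₂) * ℓ r / (β₂ - 1)) * (β₂ - 1) := by
          rw [heq]; exact h3
        exact le_of_mul_le_mul_right h4 hβ1
      have hupt : (∫ u in Ioo r 1, u ^ (-β₂) * ℓ u) ≤
          Real.exp ε * ℓ r * r ^ (1 - β₂) / (β₂ - 1 - ε) + C := by
        rw [hbsplit]; exact add_le_add hup1 hup2
      have hAD : (Real.exp ε * ℓ r * r ^ (1 - β₂) / (β₂ - 1 - ε)) /
          (r ^ (1 - β₂) * ℓ r / (β₂ - 1)) = Real.exp ε * (β₂ - 1) / (β₂ - 1 - ε) := by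
        field_simp
      calc (∫ u in Ioo r 1, u ^ (-β₂) * ℓ u) / (r ^ (1 - β₂) * ℓ r / (β₂ - 1))
          ≤ (Real.exp ε * ℓ r * r ^ (1 - β₂) / (β₂ - 1 - ε) + C) /
            (r ^ (1 - β₂) * ℓ r / (β₂ - 1)) := (div_le_div_iff_of_pos_right hD).mpr hupt
        _ = Real.exp ε * (β₂ - 1) / (β₂ - 1 - ε) +
            C / (r ^ (1 - β₂) * ℓ r / (β₂ - 1)) := by rw [add_div, hAD]
        _ < (1 + ε'/2) + ε'/4 := by linarith [hCD, hUp]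
        _ ≤ 1 + ε' := by linarith
    -- lower combination
    have hQlo : 1 - ε' < (∫ u in Ioo r 1, u ^ (-β₂) * ℓ u) /
        (r ^ (1 - β₂) * ℓ r / (β₂ - 1)) := by
      have hbr : Real.exp (-ε) * ℓ r * r ^ (1 - β₂) * (1 - s) / (β₂ - 1 + ε) ≤
          ∫ u in Ioo r 1, u ^ (-β₂) * ℓ u := by
        rw [hbsplit]; linarith [hlo1, htail]
      have hBD : (Real.exp (-ε) * ℓ r * r ^ (1 - β₂) * (1 - s) / (β₂ - 1 + ε)) /
          (r ^ (1 - β₂) * ℓ r / (β₂ - 1)) =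
          (Real.exp (-ε) * (β₂ - 1) / (β₂ - 1 + ε)) * (1 - s) := by
        field_simp
      have hstep : 1 - ε' < (Real.exp (-ε) * (β₂ - 1) / (β₂ - 1 + ε)) * (1 - s) := by
        have hs2 : s ≤ ε'/2 := hrE3
        have h1s : (0:ℝ) < 1 - s := by linarith
        nlinarith [mul_lt_mul_of_pos_right hLo h1s, mul_nonneg hε'0.le hs0]
      calc 1 - ε' < (Real.exp (-ε) * (β₂ - 1) / (β₂ - 1 + ε)) * (1 - s) := hstep
        _ = (Real.exp (-ε) * ℓ r * r ^ (1 - β₂) * (1 - s) / (β₂ - 1 + ε)) /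
            (r ^ (1 - β₂) * ℓ r / (β₂ - 1)) := hBD.symm
        _ ≤ _ := (div_le_div_iff_of_pos_right hD).mpr hbr
    rw [Real.dist_eq, abs_lt]
    exact ⟨by linarith [hQlo], by linarith [hQup]⟩
  intro ε' hε'0
  filter_upwards [main (min ε' 1) (lt_min hε'0 one_pos) (min_le_right _ _)] with r hr
  exact lt_of_lt_of_le hr (min_le_left _ _)
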